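/- Let I ⊂ ℝ be a bounded closed nondegenerate interval and f ∈ L^{r_0}(I) for some r_0 > 1. For 1 < r ≤ r_0 write τ_r^f for the unique minimizer of t ↦ ‖f − t‖_r. Then r ↦ τ_r^f is continuous on (1, r_0]. -/

import Mathlib

open Set MeasureTheory Filter Topology
open scoped ENNReal NNReal

set_option maxHeartbeats 1000000


lemma aux_rpow_le {c B s r₀ : ℝ} (hb : 0 ≤ c) (hbB : c ≤ B) (hs : 0 < s) (hsr : s ≤ r₀) :
    c ^ s ≤ 1 + B ^ r₀ := by
  have hB : 0 ≤ B := hb.trans hbB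
  rcases le_total c 1 with h1 | h1
  · have h2 : c ^ s ≤ 1 := Real.rpow_le_one hb h1 hs.le
    have h3 : 0 ≤ B ^ r₀ := Real.rpow_nonneg hB r₀
    linarith
  · calc c ^ s ≤ c ^ r₀ := Real.rpow_le_rpow_of_exponent_le h1 hsr
      _ ≤ B ^ r₀ := Real.rpow_le_rpow hb hbB (by linarith)
      _ ≤ 1 + B ^ r₀ := by linarith

lemma aux_two_rpow {u v s : ℝ} (hu : 0 ≤ u) (hv : 0 ≤ v) (hs : 0 ≤ s) :
    (u + v) ^ s ≤ 2 ^ s * (u ^ s + v ^ s) := by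
  have hm : 0 ≤ max u v := le_max_of_le_left hu
  have h1 : u + v ≤ 2 * max u v := by
    rcases le_total u v with h | h
    · rw [max_eq_right h]; linarith
    · rw [max_eq_left h]; linarith
  have h2 : (u + v) ^ s ≤ (2 * max u v) ^ s :=
    Real.rpow_le_rpow (by linarith) h1 hs
  have h3 : (2 * max u v) ^ s = 2 ^ s * (max u v) ^ s :=
    Real.mul_rpow (by norm_num) hm
  have h4 : (max u v) ^ s ≤ u ^ s + v ^ s := by
    rcases le_total u v with h | h
    · rw [max_eq_right h]
      have : 0 ≤ u ^ s := Real.rpow_nonneg hu s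
      linarith
    · rw [max_eq_left h]
      have : 0 ≤ v ^ s := Real.rpow_nonneg hv s
      linarith
  calc (u + v) ^ s ≤ 2 ^ s * (max u v) ^ s := by rw [← h3]; exact h2
    _ ≤ 2 ^ s * (u ^ s + v ^ s) := by
      have : (0:ℝ) ≤ 2 ^ s := Real.rpow_nonneg (by norm_num) s
      nlinarith

lemma aux_strictConvexOn_abs_rpow {r : ℝ} (hr : 1 < r) :
    StrictConvexOn ℝ univ (fun y : ℝ => |y| ^ r) := by
  refine ⟨convex_univ, fun x _ y _ hxy p q hp hq hpq => ?_⟩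
  simp only [smul_eq_mul]
  have hr0 : (0:ℝ) < r := by linarith
  rcases eq_or_ne |x| |y| with habs | habs
  · have hx0 : x ≠ 0 := by
      rintro rfl
      have : |y| = 0 := by simpa using habs.symm
      rw [abs_eq_zero] at this
      exact hxy this.symm
    have hy : y = -x := by
      rcases abs_eq_abs.mp habs with h | h
      · exact absurd h hxy
      · linarith
    subst hy
    have h1 : |p * x + q * -x| = |p - q| * |x| := by
      rw [← abs_mul]; ring_nf
    have h2 : |p - q| < 1 := by
      rw [abs_lt]; constructor <;> linarith
    have hxpos : 0 < |x| := abs_pos.mpr hx0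
    have h3 : |p * x + q * -x| < |x| := by
      rw [h1]; nlinarith
    calc |p * x + q * -x| ^ r < |x| ^ r :=
          Real.rpow_lt_rpow (abs_nonneg _) h3 hr0
      _ = p * |x| ^ r + q * |(-x)| ^ r := by rw [abs_neg]; nlinarith [Real.rpow_nonneg (abs_nonneg x) r]
  · have habs2 : |p * x + q * y| ≤ p * |x| + q * |y| := by
      calc |p * x + q * y| ≤ |p * x| + |q * y| := abs_add_le _ _
        _ = p * |x| + q * |y| := by rw [abs_mul, abs_mul, abs_of_pos hp, abs_of_pos hq]
    calc |p * x + q * y| ^ r ≤ (p * |x| + q * |y|) ^ r :=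
          Real.rpow_le_rpow (abs_nonneg _) habs2 hr0.le
      _ < p * |x| ^ r + q * |y| ^ r := by
          have := (strictConvexOn_rpow hr).2 (mem_Ici.mpr (abs_nonneg x))
            (mem_Ici.mpr (abs_nonneg y)) habs hp hq hpq
          simpa [smul_eq_mul] using this

theorem stmt12 (a b : ℝ) (hab : a < b) (f : ℝ → ℝ) (r₀ : ℝ) (hr₀ : 1 < r₀)
    (hLr₀ : MemLp f (ENNReal.ofReal r₀) (volume.restrict (Set.Icc a b)))
    (τ : ℝ → ℝ)
    (hτ : ∀ r ∈ Set.Ioc 1 r₀, ∀ t : ℝ,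
        eLpNorm (fun x => f x - τ r) (ENNReal.ofReal r) (volume.restrict (Set.Icc a b))
          ≤ eLpNorm (fun x => f x - t) (ENNReal.ofReal r) (volume.restrict (Set.Icc a b))) :
    ContinuousOn τ (Set.Ioc 1 r₀) := by
  set μ : Measure ℝ := volume.restrict (Set.Icc a b) with hμdef
  have hr₀0 : (0:ℝ) < r₀ := by linarith
  have hμuniv : μ Set.univ = ENNReal.ofReal (b - a) := by
    rw [hμdef, Measure.restrict_apply_univ, Real.volume_Icc]
  have hfm : AEStronglyMeasurable f μ := hLr₀.1
  haveI hfin : IsFiniteMeasure μ := ⟨by rw [hμuniv]; exact ENNReal.ofReal_lt_top⟩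
  -- measurability of the integrands
  have hmeas : ∀ s : ℝ, 0 < s → ∀ t : ℝ,
      AEStronglyMeasurable (fun x => |f x - t| ^ s) μ := by
    intro s hs t
    have hc : Continuous (fun y : ℝ => |y| ^ s) := by
      rw [continuous_iff_continuousAt]
      intro y
      exact (Real.continuousAt_rpow_const _ _ (Or.inr hs.le)).comp continuous_abs.continuousAt
    exact hc.comp_aestronglyMeasurable (hfm.sub aestronglyMeasurable_const)
  -- integrable dominating functions
  have hBint : ∀ c : ℝ, 0 ≤ c → Integrable (fun x => 1 + (|f x| + c) ^ r₀) μ := by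
    intro c hc
    have h1 : MemLp (fun x => |f x| + c) (ENNReal.ofReal r₀) μ := by
      have := hLr₀.norm.add (memLp_const (μ := μ) c)
      simpa [Real.norm_eq_abs, Pi.add_def] using this
    have h2 := h1.integrable_norm_rpow
      (by simp [ENNReal.ofReal_eq_zero]; linarith) ENNReal.ofReal_ne_top
    refine (integrable_const 1).add (h2.congr (Eventually.of_forall fun x => ?_))
    simp only [ENNReal.toReal_ofReal hr₀0.le, Real.norm_eq_abs]
    rw [abs_of_nonneg (by positivity : (0:ℝ) ≤ |f x| + c)]
  -- integrability of |f - t|^s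
  have hInt : ∀ s ∈ Set.Ioc (0:ℝ) r₀, ∀ t : ℝ, Integrable (fun x => |f x - t| ^ s) μ := by
    intro s hs t
    refine (hBint |t| (abs_nonneg t)).mono' (hmeas s hs.1 t)
      (Eventually.of_forall fun x => ?_)
    rw [Real.norm_eq_abs, abs_of_nonneg (Real.rpow_nonneg (abs_nonneg _) s)]
    exact aux_rpow_le (abs_nonneg _) (abs_sub _ _) hs.1 hs.2
  set F : ℝ → ℝ → ℝ := fun s t => ∫ x, |f x - t| ^ s ∂μ with hFdef
  have hFnonneg : ∀ s t, 0 ≤ F s t :=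
    fun s t => integral_nonneg fun x => Real.rpow_nonneg (abs_nonneg _) s
  -- minimality in terms of F
  have hmin : ∀ s ∈ Set.Ioc (1:ℝ) r₀, ∀ t : ℝ, F s (τ s) ≤ F s t := by
    intro s hs t
    have hs0 : (0:ℝ) < s := lt_trans one_pos hs.1
    have hp0 : ENNReal.ofReal s ≠ 0 := by
      simp only [ne_eq, ENNReal.ofReal_eq_zero, not_le]; linarith
    have hpt : ENNReal.ofReal s ≠ ⊤ := ENNReal.ofReal_ne_top
    have key := hτ s hs t
    rw [eLpNorm_eq_lintegral_rpow_enorm_toReal hp0 hpt,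
      eLpNorm_eq_lintegral_rpow_enorm_toReal hp0 hpt, ENNReal.toReal_ofReal hs0.le] at key
    have hlin := (ENNReal.rpow_le_rpow_iff (by positivity : (0:ℝ) < 1 / s)).mp key
    have conv : ∀ u : ℝ, ENNReal.ofReal (F s u)
        = ∫⁻ x, ‖f x - u‖ₑ ^ s ∂μ := by
      intro u
      rw [hFdef]
      rw [ofReal_integral_eq_lintegral_ofReal (hInt s ⟨hs0, hs.2⟩ u)
        (Eventually.of_forall fun x => Real.rpow_nonneg (abs_nonneg _) s)]
      refine lintegral_congr fun x => ?_
      rw [← ENNReal.ofReal_rpow_of_nonneg (abs_nonneg _) hs0.le,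
        Real.enorm_eq_ofReal_abs]
    rw [← ENNReal.ofReal_le_ofReal_iff (hFnonneg s t), conv, conv]
    exact hlin
  -- strict convexity of F s
  have hstrict : ∀ s ∈ Set.Ioc (1:ℝ) r₀, StrictConvexOn ℝ univ (F s) := by
    intro s hs
    have hs0 : (0:ℝ) < s := lt_trans one_pos hs.1
    refine ⟨convex_univ, fun t₁ _ t₂ _ hne p q hp hq hpq => ?_⟩
    simp only [smul_eq_mul]
    have hpt : ∀ x : ℝ, |f x - (p * t₁ + q * t₂)| ^ s
        < p * |f x - t₁| ^ s + q * |f x - t₂| ^ s := by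
      intro x
      have hne2 : f x - t₁ ≠ f x - t₂ := by
        intro h; exact hne (by linarith)
      have h := (aux_strictConvexOn_abs_rpow hs.1).2 (mem_univ (f x - t₁))
        (mem_univ (f x - t₂)) hne2 hp hq hpq
      simp only [smul_eq_mul] at h
      have heq : p * (f x - t₁) + q * (f x - t₂) = f x - (p * t₁ + q * t₂) := by
        have : p * (f x - t₁) + q * (f x - t₂) = (p + q) * f x - (p * t₁ + q * t₂) := by ring
        rw [this, hpq, one_mul]
      rwa [heq] at h
    have hint1 := hInt s ⟨hs0, hs.2⟩ t₁
    have hint2 := hInt s ⟨hs0, hs.2⟩ t₂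
    have hintm := hInt s ⟨hs0, hs.2⟩ (p * t₁ + q * t₂)
    have hintc : Integrable
        (fun x => p * |f x - t₁| ^ s + q * |f x - t₂| ^ s) μ :=
      (hint1.const_mul p).add (hint2.const_mul q)
    have hdiff : Integrable
        (fun x => p * |f x - t₁| ^ s + q * |f x - t₂| ^ s
          - |f x - (p * t₁ + q * t₂)| ^ s) μ := hintc.sub hintm
    have hpos : 0 < ∫ x, (p * |f x - t₁| ^ s + q * |f x - t₂| ^ s
        - |f x - (p * t₁ + q * t₂)| ^ s) ∂μ := by
      rw [integral_pos_iff_support_of_nonneg_ae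
        (Eventually.of_forall fun x => sub_nonneg.mpr (hpt x).le) hdiff]
      have hsupp : Function.support (fun x => p * |f x - t₁| ^ s + q * |f x - t₂| ^ s
          - |f x - (p * t₁ + q * t₂)| ^ s) = Set.univ :=
        eq_univ_of_forall fun x => ne_of_gt (sub_pos.mpr (hpt x))
      rw [hsupp, hμuniv]
      simp only [ENNReal.ofReal_pos]
      linarith
    rw [integral_sub hintc hintm, integral_add (hint1.const_mul p) (hint2.const_mul q),
      integral_const_mul, integral_const_mul] at hpos
    rw [hFdef]
    simp only []
    linarith
  -- joint continuity of F within S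
  have hFcont : ∀ r ∈ Set.Ioc (0:ℝ) r₀, ∀ t₀ : ℝ,
      ContinuousWithinAt (fun p : ℝ × ℝ => F p.1 p.2)
        (Set.Ioc (0:ℝ) r₀ ×ˢ (univ : Set ℝ)) (r, t₀) := by
    intro r hr t₀
    rw [hFdef]
    apply continuousWithinAt_of_dominated
      (bound := fun x => 1 + (|f x| + (|t₀| + 1)) ^ r₀)
    · filter_upwards [self_mem_nhdsWithin] with p hp
      exact hmeas p.1 hp.1.1 p.2
    · have hmem : {p : ℝ × ℝ | |p.2 - t₀| < 1}
          ∈ 𝓝[Set.Ioc (0:ℝ) r₀ ×ˢ (univ : Set ℝ)] ((r, t₀) : ℝ × ℝ) := by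
        apply nhdsWithin_le_nhds
        refine IsOpen.mem_nhds (isOpen_lt ?_ continuous_const) (by simp)
        exact (continuous_snd.sub continuous_const).abs
      filter_upwards [self_mem_nhdsWithin, hmem] with p hpS hpt
      refine Eventually.of_forall fun x => ?_
      rw [Real.norm_eq_abs, abs_of_nonneg (Real.rpow_nonneg (abs_nonneg _) _)]
      refine aux_rpow_le (abs_nonneg _) ?_ hpS.1.1 hpS.1.2
      have h1 : |f x - p.2| ≤ |f x| + |p.2| := abs_sub _ _
      have h2 : |p.2| ≤ |t₀| + |p.2 - t₀| := by
        calc |p.2| = |t₀ + (p.2 - t₀)| := by ring_nf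
          _ ≤ |t₀| + |p.2 - t₀| := abs_add_le _ _
      have h3 : |p.2 - t₀| < 1 := hpt
      linarith
    · exact hBint (|t₀| + 1) (by positivity)
    · refine Eventually.of_forall fun x => ?_
      have h1 : ContinuousAt (fun p : ℝ × ℝ => ((|f x - p.2| : ℝ), p.1)) (r, t₀) :=
        (((continuous_const.sub continuous_snd).abs).prodMk continuous_fst).continuousAt
      have h2 : ContinuousAt ((fun q : ℝ × ℝ => q.1 ^ q.2)
          ∘ (fun p : ℝ × ℝ => ((|f x - p.2| : ℝ), p.1))) (r, t₀) :=
        ContinuousAt.comp (Real.continuousAt_rpow ((|f x - t₀| : ℝ), r) (Or.inr hr.1)) h1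
      exact h2.continuousWithinAt
  -- boundedness of τ
  obtain ⟨M, hM⟩ : ∃ M : ℝ, ∀ s ∈ Set.Ioc (1:ℝ) r₀, |τ s| ≤ M := by
    set K := ∫ x, (1 + |f x| ^ r₀) ∂μ with hKdef
    have hKint : Integrable (fun x => 1 + |f x| ^ r₀) μ := by
      simpa using hBint 0 le_rfl
    have hK0 : 0 ≤ K := integral_nonneg fun x => by positivity
    have hF0 : ∀ s ∈ Set.Ioc (0:ℝ) r₀, F s 0 ≤ K := by
      intro s hs
      refine integral_mono (hInt s hs 0) hKint fun x => ?_
      simpa [sub_zero] using aux_rpow_le (abs_nonneg (f x)) le_rfl hs.1 hs.2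
    set C : ℝ := 2 ^ r₀ * (2 * K) / (b - a) with hCdef
    refine ⟨max 1 C, fun s hs => ?_⟩
    have hs0 : (0:ℝ) < s := lt_trans one_pos hs.1
    have hmem : s ∈ Set.Ioc (0:ℝ) r₀ := ⟨hs0, hs.2⟩
    have hpt : ∀ x : ℝ, |τ s| ^ s ≤ 2 ^ s * (|f x - 0| ^ s + |f x - τ s| ^ s) := by
      intro x
      have h1 : |τ s| ≤ |f x - 0| + |f x - τ s| := by
        rw [sub_zero]
        have heq : τ s = f x - (f x - τ s) := by ring
        calc |τ s| = |f x - (f x - τ s)| := by rw [← heq]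
          _ ≤ |f x| + |f x - τ s| := abs_sub _ _
      calc |τ s| ^ s ≤ (|f x - 0| + |f x - τ s|) ^ s :=
            Real.rpow_le_rpow (abs_nonneg _) h1 hs0.le
        _ ≤ 2 ^ s * (|f x - 0| ^ s + |f x - τ s| ^ s) :=
            aux_two_rpow (abs_nonneg _) (abs_nonneg _) hs0.le
    have hint0 := hInt s hmem 0
    have hintτ := hInt s hmem (τ s)
    have hrhs : Integrable (fun x => 2 ^ s * (|f x - 0| ^ s + |f x - τ s| ^ s)) μ :=
      (hint0.add hintτ).const_mul (2 ^ s)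
    have hI : ∫ _x, (|τ s| ^ s : ℝ) ∂μ
        ≤ ∫ x, 2 ^ s * (|f x - 0| ^ s + |f x - τ s| ^ s) ∂μ :=
      integral_mono (integrable_const _) hrhs hpt
    rw [integral_const, integral_const_mul, integral_add hint0 hintτ] at hI
    have e0 : (∫ x, |f x - 0| ^ s ∂μ) = F s 0 := rfl
    have eτ : (∫ x, |f x - τ s| ^ s ∂μ) = F s (τ s) := rfl
    rw [e0, eτ, measureReal_def, hμuniv, ENNReal.toReal_ofReal (by linarith : (0:ℝ) ≤ b - a),
      smul_eq_mul] at hI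
    have h2s : (2:ℝ) ^ s ≤ 2 ^ r₀ := Real.rpow_le_rpow_of_exponent_le one_le_two hs.2
    have h2s0 : (0:ℝ) ≤ 2 ^ s := Real.rpow_nonneg (by norm_num) s
    have hFsum : F s 0 + F s (τ s) ≤ 2 * K := by
      have := hmin s hs 0
      have := hF0 s hmem
      linarith
    have hItot : (b - a) * |τ s| ^ s ≤ 2 ^ r₀ * (2 * K) := by
      have hFsum0 : 0 ≤ F s 0 + F s (τ s) := by
        have := hFnonneg s 0; have := hFnonneg s (τ s); linarith
      calc (b - a) * |τ s| ^ s ≤ 2 ^ s * (F s 0 + F s (τ s)) := hI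
        _ ≤ 2 ^ r₀ * (F s 0 + F s (τ s)) := by nlinarith
        _ ≤ 2 ^ r₀ * (2 * K) := by
            have : (0:ℝ) ≤ 2 ^ r₀ := Real.rpow_nonneg (by norm_num) r₀
            nlinarith
    have hC : |τ s| ^ s ≤ C := by
      rw [hCdef, le_div_iff₀ (by linarith : (0:ℝ) < b - a)]
      linarith [hItot]
    by_cases h1 : |τ s| ≤ 1
    · exact le_trans h1 (le_max_left _ _)
    · push_neg at h1
      refine le_trans ?_ (le_max_right _ _)
      calc |τ s| = |τ s| ^ (1:ℝ) := (Real.rpow_one _).symm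
        _ ≤ |τ s| ^ s := Real.rpow_le_rpow_of_exponent_le h1.le hs.1.le
        _ ≤ C := hC
  -- main argument
  intro r hr
  have hr0 : (0:ℝ) < r := lt_trans one_pos hr.1
  show Tendsto τ (𝓝[Set.Ioc 1 r₀] r) (𝓝 (τ r))
  apply tendsto_of_subseq_tendsto
  intro ns hns
  rw [tendsto_nhdsWithin_iff] at hns
  obtain ⟨hns1, hns2⟩ := hns
  obtain ⟨N, hN⟩ := eventually_atTop.mp hns2
  have hmemN : ∀ k : ℕ, ns (k + N) ∈ Set.Ioc (1:ℝ) r₀ := fun k => hN _ (Nat.le_add_left _ _)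
  have hboundN : ∀ k : ℕ, τ (ns (k + N)) ∈ Set.Icc (-M) M := by
    intro k
    have := hM _ (hmemN k)
    rw [abs_le] at this
    exact ⟨this.1, this.2⟩
  obtain ⟨t₀, _, φ, hφ, hconv⟩ :=
    tendsto_subseq_of_bounded (Metric.isBounded_Icc (-M) M) hboundN
  refine ⟨fun k => φ k + N, ?_⟩
  have hconv' : Tendsto (fun k => τ (ns (φ k + N))) atTop (𝓝 t₀) := hconv
  suffices ht₀ : t₀ = τ r by
    rw [← ht₀]; exact hconv'
  set w : ℕ → ℝ := fun k => ns (φ k + N) with hwdef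
  have hw_mem : ∀ k, w k ∈ Set.Ioc (1:ℝ) r₀ := fun k => hmemN (φ k)
  have hw_tendsto : Tendsto w atTop (𝓝 r) := by
    refine hns1.comp (tendsto_atTop_mono (fun n => ?_) tendsto_id)
    exact le_trans (hφ.id_le n) (Nat.le_add_right _ _)
  have hmin_t₀ : ∀ t : ℝ, F r t₀ ≤ F r t := by
    intro t
    have hS : Tendsto (fun k => ((w k : ℝ), τ (w k))) atTop
        (𝓝[Set.Ioc (0:ℝ) r₀ ×ˢ (univ : Set ℝ)] (r, t₀)) := by
      rw [tendsto_nhdsWithin_iff]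
      refine ⟨hw_tendsto.prodMk_nhds hconv', Eventually.of_forall fun k =>
        ⟨⟨lt_trans one_pos (hw_mem k).1, (hw_mem k).2⟩, mem_univ _⟩⟩
    have h1 : Tendsto ((fun p : ℝ × ℝ => F p.1 p.2) ∘ (fun k => ((w k : ℝ), τ (w k))))
        atTop (𝓝 (F r t₀)) :=
      Filter.Tendsto.comp (hFcont r ⟨hr0, hr.2⟩ t₀).tendsto hS
    have hS2 : Tendsto (fun k => ((w k : ℝ), t)) atTop
        (𝓝[Set.Ioc (0:ℝ) r₀ ×ˢ (univ : Set ℝ)] (r, t)) := by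
      rw [tendsto_nhdsWithin_iff]
      refine ⟨hw_tendsto.prodMk_nhds tendsto_const_nhds, Eventually.of_forall fun k =>
        ⟨⟨lt_trans one_pos (hw_mem k).1, (hw_mem k).2⟩, mem_univ _⟩⟩
    have h2 : Tendsto ((fun p : ℝ × ℝ => F p.1 p.2) ∘ (fun k => ((w k : ℝ), t)))
        atTop (𝓝 (F r t)) :=
      Filter.Tendsto.comp (hFcont r ⟨hr0, hr.2⟩ t).tendsto hS2
    exact le_of_tendsto_of_tendsto' h1 h2 fun k => hmin (w k) (hw_mem k) t
  exact (hstrict r hr).eq_of_isMinOn (isMinOn_univ_iff.mpr hmin_t₀)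
    (isMinOn_univ_iff.mpr (hmin r hr)) (mem_univ _) (mem_univ _)
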